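/- Let T be a bounded operator on a Hilbert space H with T*ΔT ≤ Δ where Δ = T*T − I ≥ 0. Then the closure of the range of Δ is invariant under T*. -/

import Mathlib

open ContinuousLinearMap

local notation "⟪" x ", " y "⟫" => @inner ℂ _ _ x y

/-- A positive operator with vanishing quadratic form at `x` kills `x`. -/
lemma aux_pos_apply_eq_zero {H : Type*} [NormedAddCommGroup H] [InnerProductSpace ℂ H]
    [CompleteSpace H] {A : H →L[ℂ] H} (hA : A.IsPositive) {x : H}
    (hx : Complex.re ⟪A x, x⟫ = 0) : A x = 0 := by
  have hsym0 : A.IsSymmetric := hA.1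
  have hsym : ∀ u v : H, ⟪A u, v⟫ = ⟪u, A v⟫ := fun u v => hsym0 u v
  set y := A x with hy
  have hC : 0 ≤ Complex.re ⟪A y, y⟫ := by
    have := hA.2 y
    rwa [reApplyInnerSelf_apply] at this
  set a : ℝ := ‖y‖ ^ 2 with haa
  set C : ℝ := Complex.re ⟪A y, y⟫ with hCC
  have key : ∀ t : ℝ, 0 ≤ 2 * t * a + t ^ 2 * C := by
    intro t
    have h0 := hA.2 (x + (t : ℂ) • y)
    rw [reApplyInnerSelf_apply] at h0
    have hxy : ⟪A x, y⟫ = (a : ℂ) := by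
      rw [hy, haa, inner_self_eq_norm_sq_to_K]
      norm_cast
    have hyx : ⟪A y, x⟫ = (a : ℂ) := by
      rw [hsym y x, ← hy, haa, inner_self_eq_norm_sq_to_K]
      norm_cast
    have expand : ⟪A (x + (t : ℂ) • y), x + (t : ℂ) • y⟫ =
        ⟪A x, x⟫ + (t : ℂ) * (a : ℂ) + (t : ℂ) * (a : ℂ) + ((t ^ 2 : ℝ) : ℂ) * ⟪A y, y⟫ := by
      rw [map_add, map_smul]
      rw [inner_add_left, inner_add_right, inner_add_right, inner_smul_left, inner_smul_right,
        inner_smul_left, inner_smul_right, hxy, hyx, Complex.conj_ofReal]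
      push_cast
      ring
    rw [expand] at h0
    have hre : RCLike.re (⟪A x, x⟫ + (t : ℂ) * (a : ℂ) + (t : ℂ) * (a : ℂ)
        + ((t ^ 2 : ℝ) : ℂ) * ⟪A y, y⟫) = Complex.re ⟪A x, x⟫ + t * a + t * a + t ^ 2 * C := by
      simp only [RCLike.re_to_complex, Complex.add_re, Complex.mul_re, Complex.ofReal_re,
        Complex.ofReal_im, ← hCC]
      ring
    rw [hre, hx] at h0
    linarith
  have hC1 : (0:ℝ) < C + 1 := by linarith
  have ht := key (-a / (C + 1))
  have h2 : 0 ≤ (2 * (-a / (C + 1)) * a + (-a / (C + 1)) ^ 2 * C) * (C + 1) ^ 2 :=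
    mul_nonneg ht (by positivity)
  have h3 : (2 * (-a / (C + 1)) * a + (-a / (C + 1)) ^ 2 * C) * (C + 1) ^ 2 =
      -(a ^ 2 * (C + 2)) := by
    field_simp
    ring
  rw [h3] at h2
  have ha2 : a ^ 2 = 0 := by nlinarith [sq_nonneg a]
  have ha : a = 0 := by
    exact pow_eq_zero_iff (n := 2) (by norm_num) |>.mp ha2
  have : ‖y‖ = 0 := by
    have : ‖y‖ ^ 2 = 0 := by rw [← haa]; exact ha
    exact pow_eq_zero_iff (n := 2) (by norm_num) |>.mp this
  simpa [hy] using norm_eq_zero.mp this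

theorem stmt6 {H : Type*} [NormedAddCommGroup H] [InnerProductSpace ℂ H] [CompleteSpace H]
    (T : H →L[ℂ] H)
    (hpos : (adjoint T * T - 1).IsPositive)
    (hineq : ((adjoint T * T - 1) - adjoint T * (adjoint T * T - 1) * T).IsPositive) :
    ∀ x : H, x ∈ closure (Set.range ⇑(adjoint T * T - 1)) →
      adjoint T x ∈ closure (Set.range ⇑(adjoint T * T - 1)) := by
  set Δ : H →L[ℂ] H := adjoint T * T - 1 with hΔ
  have hsym0 : Δ.IsSymmetric := hpos.1
  have hsym : ∀ u v : H, ⟪Δ u, v⟫ = ⟪u, Δ v⟫ := fun u v => hsym0 u v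
  -- T maps ker Δ to ker Δ
  have hker : ∀ y : H, Δ y = 0 → Δ (T y) = 0 := by
    intro y hyk
    apply aux_pos_apply_eq_zero hpos
    have h1 := hineq.2 y
    rw [reApplyInnerSelf_apply] at h1
    have e : (Δ - adjoint T * Δ * T) y = Δ y - adjoint T (Δ (T y)) := by
      simp [mul_apply]
    rw [e, hyk] at h1
    have e2 : ⟪(0 : H) - adjoint T (Δ (T y)), y⟫ = -⟪Δ (T y), T y⟫ := by
      rw [zero_sub, inner_neg_left, adjoint_inner_left]
    rw [e2] at h1
    have h2 := hpos.2 (T y)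
    rw [reApplyInnerSelf_apply] at h2
    simp only [map_neg, RCLike.re_to_complex] at h1 h2
    linarith
  -- closure of range Δ = (ker Δ)ᗮ
  have hrangeorth : (LinearMap.range (Δ : H →ₗ[ℂ] H))ᗮ = LinearMap.ker (Δ : H →ₗ[ℂ] H) := by
    ext z
    constructor
    · intro hz
      rw [Submodule.mem_orthogonal] at hz
      have h1 := hz (Δ (Δ z)) (LinearMap.mem_range_self _ (Δ z))
      rw [hsym (Δ z) z] at h1
      rw [LinearMap.mem_ker]
      exact inner_self_eq_zero.mp h1
    · intro hz
      intro u hu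
      obtain ⟨w, rfl⟩ := hu
      rw [LinearMap.mem_ker] at hz
      change ⟪Δ w, z⟫ = 0
      rw [hsym w z, show Δ z = 0 from hz]
      exact inner_zero_right w
  have hclosure : closure (Set.range ⇑Δ) = ((LinearMap.ker (Δ : H →ₗ[ℂ] H))ᗮ : Set H) := by
    have h0 : (Set.range ⇑Δ) = ((LinearMap.range (Δ : H →ₗ[ℂ] H) : Submodule ℂ H) : Set H) := by
      ext u
      simp [LinearMap.mem_range]
    rw [h0, ← Submodule.topologicalClosure_coe,
      ← Submodule.orthogonal_orthogonal_eq_closure, hrangeorth]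
  intro x hx
  rw [hclosure] at hx ⊢
  rw [SetLike.mem_coe, Submodule.mem_orthogonal] at hx ⊢
  intro y hy
  rw [LinearMap.mem_ker] at hy
  rw [adjoint_inner_right]
  exact hx (T y) (LinearMap.mem_ker.mpr (hker y hy))
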